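/- There exist a complex Hilbert space H, a paranormal bounded linear operator T on H, a nonzero vector x ∈ H, and a scalar λ ∈ ℂ such that T x = λ x but T* x ≠ conj(λ) x. In other words, the eigenvector property of *-paranormal operators (eigenvectors of T for λ are eigenvectors of T* for conj(λ)) fails for paranormal operators. -/

import Mathlib

open ContinuousLinearMap
open scoped ENNReal

noncomputable section ParanormalEx

/-- The Hilbert space `ℓ²(ℕ, ℂ)`. -/
abbrev Hex : Type := lp (fun _ : ℕ => ℂ) 2

/-- The underlying function of the operator: `e₀ ↦ 0`, `e₁ ↦ e₀ + e₂`,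
`eₙ ↦ 2 eₙ₊₁` for `n ≥ 2`. -/
def Tfun (x : ℕ → ℂ) : ℕ → ℂ := fun n =>
  match n with
  | 0 => x 1
  | 1 => 0
  | 2 => x 1
  | (n + 3) => 2 * x (n + 2)

lemma Tfun_add (x y : ℕ → ℂ) : Tfun (x + y) = Tfun x + Tfun y := by
  funext n
  rcases n with _ | _ | _ | n <;> simp [Tfun] <;> ring

lemma Tfun_smul (c : ℂ) (x : ℕ → ℂ) : Tfun (c • x) = c • Tfun x := by
  funext n
  rcases n with _ | _ | _ | n <;> simp [Tfun] <;> ring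


lemma rpow_toReal_two (r : ℝ) : r ^ (2 : ℝ≥0∞).toReal = r ^ 2 := by
  rw [ENNReal.toReal_ofNat, Real.rpow_two]

lemma summable_sq (x : Hex) : Summable (fun n => ‖(x : ℕ → ℂ) n‖ ^ 2) := by
  have h := (lp.memℓp x).summable (p := 2) (by norm_num)
  simpa only [rpow_toReal_two] using h

/-- `‖Tx‖²` as a sum: `2‖x₁‖² + 4 ∑_{n≥2} ‖xₙ‖²`. -/
lemma hasSum_Tfun (x : ℕ → ℂ) (hx : Summable fun n => ‖x n‖ ^ 2) :
    HasSum (fun n => ‖Tfun x n‖ ^ 2)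
      (2 * ‖x 1‖ ^ 2 + 4 * ∑' n, ‖x (n + 2)‖ ^ 2) := by
  have hS : Summable fun n => ‖x (n + 2)‖ ^ 2 := (summable_nat_add_iff (f := fun n => ‖x n‖ ^ 2) 2).2 hx
  have h1 : HasSum (fun n => ‖Tfun x (n + 3)‖ ^ 2) (4 * ∑' n, ‖x (n + 2)‖ ^ 2) := by
    have : (fun n => ‖Tfun x (n + 3)‖ ^ 2) = fun n => 4 * ‖x (n + 2)‖ ^ 2 := by
      funext n
      simp [Tfun, norm_mul, mul_pow]
      norm_num
    rw [this]
    exact hS.hasSum.mul_left 4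
  have h2 := (hasSum_nat_add_iff (f := fun n => ‖Tfun x n‖ ^ 2) 3).1 h1
  convert h2 using 1
  · rfl
  simp [Finset.sum_range_succ, Tfun]
  ring

/-- `‖T²x‖²` as a sum: `4‖x₁‖² + 16 ∑_{n≥2} ‖xₙ‖²`. -/
lemma hasSum_Tfun_sq (x : ℕ → ℂ) (hx : Summable fun n => ‖x n‖ ^ 2) :
    HasSum (fun n => ‖Tfun (Tfun x) n‖ ^ 2)
      (4 * ‖x 1‖ ^ 2 + 16 * ∑' n, ‖x (n + 2)‖ ^ 2) := by
  have hS : Summable fun n => ‖x (n + 2)‖ ^ 2 := (summable_nat_add_iff (f := fun n => ‖x n‖ ^ 2) 2).2 hx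
  have h1 : HasSum (fun n => ‖Tfun (Tfun x) (n + 4)‖ ^ 2)
      (16 * ∑' n, ‖x (n + 2)‖ ^ 2) := by
    have : (fun n => ‖Tfun (Tfun x) (n + 4)‖ ^ 2) = fun n => 16 * ‖x (n + 2)‖ ^ 2 := by
      funext n
      simp [Tfun, norm_mul, mul_pow]
      norm_num
      ring
    rw [this]
    exact hS.hasSum.mul_left 16
  have h2 := (hasSum_nat_add_iff (f := fun n => ‖Tfun (Tfun x) n‖ ^ 2) 4).1 h1
  convert h2 using 1
  · rfl
  simp [Finset.sum_range_succ, Tfun, norm_mul, mul_pow]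
  norm_num
  ring

lemma memℓp_Tfun (x : Hex) : Memℓp (Tfun x) 2 := by
  apply memℓp_gen
  have h := (hasSum_Tfun x (summable_sq x)).summable
  simpa only [rpow_toReal_two] using h

/-- `‖x‖²` as a sum. -/
lemma hasSum_self (x : Hex) :
    HasSum (fun n => ‖(x : ℕ → ℂ) n‖ ^ 2) (‖x‖ ^ 2) := by
  have h := lp.hasSum_norm (p := 2) (by norm_num) x
  simpa only [rpow_toReal_two] using h

/-- The paranormal operator, as a continuous linear map. -/
def Tpara : Hex →L[ℂ] Hex := by
  refine LinearMap.mkContinuous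
    { toFun := fun x => ⟨Tfun x, memℓp_Tfun x⟩
      map_add' := ?_
      map_smul' := ?_ } 2 ?_
  · intro x y
    apply Subtype.ext
    have : ((x + y : Hex) : ℕ → ℂ) = (x : ℕ → ℂ) + (y : ℕ → ℂ) := lp.coeFn_add x y
    simp only [this, Tfun_add]
    rfl
  · intro c x
    apply Subtype.ext
    have : ((c • x : Hex) : ℕ → ℂ) = c • (x : ℕ → ℂ) := lp.coeFn_smul c x
    simp only [this, Tfun_smul]
    rfl
  · intro x
    show ‖(⟨Tfun x, memℓp_Tfun x⟩ : Hex)‖ ≤ 2 * ‖x‖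
    have e1 : ‖(⟨Tfun x, memℓp_Tfun x⟩ : Hex)‖ ^ 2
        = 2 * ‖(x : ℕ → ℂ) 1‖ ^ 2 + 4 * ∑' n, ‖(x : ℕ → ℂ) (n + 2)‖ ^ 2 :=
      (hasSum_self _).unique (hasSum_Tfun x (summable_sq x))
    have hS : Summable fun n => ‖(x : ℕ → ℂ) (n + 2)‖ ^ 2 :=
      (summable_nat_add_iff (f := fun n => ‖(x : ℕ → ℂ) n‖ ^ 2) 2).2 (summable_sq x)
    have e2 : ‖x‖ ^ 2 = (∑' n, ‖(x : ℕ → ℂ) (n + 2)‖ ^ 2)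
        + (‖(x : ℕ → ℂ) 0‖ ^ 2 + (‖(x : ℕ → ℂ) 1‖ ^ 2 + 0)) := by
      refine (hasSum_self x).unique ?_
      have h2 := (hasSum_nat_add_iff (f := fun n => ‖(x : ℕ → ℂ) n‖ ^ 2) 2).1 hS.hasSum
      simpa [Finset.sum_range_succ] using h2
    have hs0 : 0 ≤ ∑' n, ‖(x : ℕ → ℂ) (n + 2)‖ ^ 2 := tsum_nonneg fun n => by positivity
    have hn1 : (0:ℝ) ≤ ‖(⟨Tfun x, memℓp_Tfun x⟩ : Hex)‖ := norm_nonneg _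
    have hn2 : (0:ℝ) ≤ ‖x‖ := norm_nonneg _
    nlinarith [sq_nonneg (‖(x : ℕ → ℂ) 0‖), sq_nonneg (‖(x : ℕ → ℂ) 1‖)]

lemma Tpara_coe (x : Hex) : (Tpara x : ℕ → ℂ) = Tfun x := rfl

lemma norm_Tpara_sq (x : Hex) :
    ‖Tpara x‖ ^ 2 = 2 * ‖(x : ℕ → ℂ) 1‖ ^ 2 + 4 * ∑' n, ‖(x : ℕ → ℂ) (n + 2)‖ ^ 2 :=
  (hasSum_self (Tpara x)).unique (hasSum_Tfun x (summable_sq x))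

lemma norm_Tpara2_sq (x : Hex) :
    ‖Tpara (Tpara x)‖ ^ 2
      = 4 * ‖(x : ℕ → ℂ) 1‖ ^ 2 + 16 * ∑' n, ‖(x : ℕ → ℂ) (n + 2)‖ ^ 2 :=
  (hasSum_self (Tpara (Tpara x))).unique (hasSum_Tfun_sq x (summable_sq x))

lemma norm_sq_lower (x : Hex) :
    ‖(x : ℕ → ℂ) 1‖ ^ 2 + (∑' n, ‖(x : ℕ → ℂ) (n + 2)‖ ^ 2) ≤ ‖x‖ ^ 2 := by
  have hS : Summable fun n => ‖(x : ℕ → ℂ) (n + 2)‖ ^ 2 :=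
    (summable_nat_add_iff (f := fun n => ‖(x : ℕ → ℂ) n‖ ^ 2) 2).2 (summable_sq x)
  have e2 : ‖x‖ ^ 2 = (∑' n, ‖(x : ℕ → ℂ) (n + 2)‖ ^ 2)
      + (‖(x : ℕ → ℂ) 0‖ ^ 2 + (‖(x : ℕ → ℂ) 1‖ ^ 2 + 0)) := by
    refine (hasSum_self x).unique ?_
    have h2 := (hasSum_nat_add_iff (f := fun n => ‖(x : ℕ → ℂ) n‖ ^ 2) 2).1 hS.hasSum
    simpa [Finset.sum_range_succ] using h2
  nlinarith [sq_nonneg (‖(x : ℕ → ℂ) 0‖)]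

/-- `Tpara` is paranormal. -/
lemma Tpara_paranormal (y : Hex) : ‖Tpara y‖ ^ 2 ≤ ‖Tpara (Tpara y)‖ * ‖y‖ := by
  set a := ‖(y : ℕ → ℂ) 1‖ ^ 2 with ha
  set s := ∑' n, ‖(y : ℕ → ℂ) (n + 2)‖ ^ 2 with hs
  have ha0 : 0 ≤ a := by positivity
  have hs0 : 0 ≤ s := tsum_nonneg fun n => by positivity
  have h1 := norm_Tpara_sq y
  have h2 := norm_Tpara2_sq y
  have h3 := norm_sq_lower y
  have n1 : (0:ℝ) ≤ ‖Tpara y‖ := norm_nonneg _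
  have n2 : (0:ℝ) ≤ ‖Tpara (Tpara y)‖ := norm_nonneg _
  have n3 : (0:ℝ) ≤ ‖y‖ := norm_nonneg _
  -- it suffices to compare squares
  have key : (‖Tpara y‖ ^ 2) ^ 2 ≤ (‖Tpara (Tpara y)‖ * ‖y‖) ^ 2 := by
    have : (‖Tpara (Tpara y)‖ * ‖y‖) ^ 2 = ‖Tpara (Tpara y)‖ ^ 2 * ‖y‖ ^ 2 := by ring
    rw [this, h1, h2]
    nlinarith
  nlinarith [key, mul_nonneg n2 n3, sq_nonneg (‖Tpara y‖ ^ 2 - ‖Tpara (Tpara y)‖ * ‖y‖)]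

/-- The first basis vector `e₀`. -/
def e0 : Hex := lp.single 2 0 (1 : ℂ)

/-- The second basis vector `e₁`. -/
def e1 : Hex := lp.single 2 1 (1 : ℂ)

lemma Tpara_e0 : Tpara e0 = 0 := by
  apply Subtype.ext
  funext n
  have h1 : (e0 : ℕ → ℂ) 1 = 0 := by
    simp [e0, lp.single_apply, Pi.single_apply]
  have hcoe : (Tpara e0 : ℕ → ℂ) = Tfun e0 := rfl
  have hz : ((0 : Hex) : ℕ → ℂ) = 0 := lp.coeFn_zero _ _
  rw [hcoe, hz]
  rcases n with _ | _ | _ | n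
  · simp [Tfun, h1]
  · simp [Tfun]
  · simp [Tfun, h1]
  · have : (e0 : ℕ → ℂ) (n + 2) = 0 := by
      simp [e0, lp.single_apply, Pi.single_apply]
    simp [Tfun, this]

end ParanormalEx

/-- The eigenvector property of *-paranormal operators fails for paranormal operators:
there exist a complex Hilbert space `H`, a paranormal operator `T`, a nonzero vector `x`
and a scalar `λ` with `T x = λ x` but `T* x ≠ conj(λ) x`. -/
theorem paranormal_eigenvector_adjoint_fails :
    ∃ (H : Type) (_ : NormedAddCommGroup H) (_ : InnerProductSpace ℂ H)
      (_ : CompleteSpace H) (T : H →L[ℂ] H) (x : H) (lam : ℂ),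
      (∀ y : H, ‖T y‖ ^ 2 ≤ ‖T (T y)‖ * ‖y‖) ∧
      x ≠ 0 ∧ T x = lam • x ∧ adjoint T x ≠ (starRingEnd ℂ) lam • x := by
  refine ⟨Hex, inferInstance, inferInstance, inferInstance, Tpara, e0, 0,
    Tpara_paranormal, ?_, ?_, ?_⟩
  · intro h
    have h0 : (e0 : ℕ → ℂ) 0 = 1 := by
      simp [e0, lp.single_apply, Pi.single_apply]
    rw [h] at h0
    have : ((0 : Hex) : ℕ → ℂ) 0 = 0 := by rw [lp.coeFn_zero]; rfl
    rw [this] at h0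
    exact one_ne_zero h0.symm
  · simpa using Tpara_e0
  · intro h
    have hinner : (inner ℂ (adjoint Tpara e0) e1 : ℂ) = inner ℂ e0 (Tpara e1) :=
      ContinuousLinearMap.adjoint_inner_left _ _ _
    have hL : (inner ℂ (adjoint Tpara e0) e1 : ℂ) = 0 := by
      rw [h]; simp
    have hR : (inner ℂ e0 (Tpara e1) : ℂ) = 1 := by
      have : (inner ℂ e0 (Tpara e1) : ℂ) = inner ℂ ((1:ℂ)) ((Tpara e1 : ℕ → ℂ) 0) :=
        lp.inner_single_left 0 (1 : ℂ) (Tpara e1)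
      rw [this]
      have hc : (Tpara e1 : ℕ → ℂ) 0 = (e1 : ℕ → ℂ) 1 := rfl
      have h11 : (e1 : ℕ → ℂ) 1 = 1 := by
        simp [e1, lp.single_apply, Pi.single_apply]
      simp [hc, h11]
    rw [hL, hR] at hinner
    exact zero_ne_one hinner
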